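/- arXiv:1806.00854 — 3 statements merged into one kernel-verified Lean document; each statement's English description precedes it below -/
import Mathlib

section
/- Let d ≥ 1 and let f = X^{d+1} ∈ ℂ[X], and let D : ℂ[X] → ℂ[X] be the ℂ-linear map D(P) = P' + f'·P with f' = (d+1)X^d. Then the images of the monomials 1, X, X², …, X^{d-1} in the quotient ℂ[X]/range(D) form a basis of this quotient; in particular ℂ[X]/range(D) has dimension d over ℂ. -/
open Polynomial

/-- The twisted de Rham differential `D(P) = P' + f'·P` on `ℂ[X]`,
for `f = X^(d+1)`. -/
noncomputable def twistedD (d : ℕ) : ℂ[X] →ₗ[ℂ] ℂ[X] :=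
  Polynomial.derivative + LinearMap.mulLeft ℂ (Polynomial.derivative ((X : ℂ[X]) ^ (d + 1)))

lemma twistedD_apply (d : ℕ) (P : ℂ[X]) :
    twistedD d P = derivative P + C ((d : ℂ) + 1) * (X ^ d * P) := by
  simp [twistedD, derivative_X_pow, mul_assoc]

lemma dcast_ne (d : ℕ) : ((d : ℂ) + 1) ≠ 0 := by
  exact_mod_cast Nat.succ_ne_zero d

lemma coeff_twistedD (d : ℕ) (Q : ℂ[X]) :
    (twistedD d Q).coeff (d + Q.natDegree) = ((d : ℂ) + 1) * Q.leadingCoeff := by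
  rw [twistedD_apply, coeff_add, coeff_C_mul]
  have h1 : (derivative Q).coeff (d + Q.natDegree) = 0 := by
    rw [coeff_derivative, coeff_eq_zero_of_natDegree_lt (by omega), zero_mul]
  have h2 : (X ^ d * Q : ℂ[X]).coeff (d + Q.natDegree) = Q.coeff Q.natDegree := by
    rw [add_comm]; exact coeff_X_pow_mul Q d Q.natDegree
  rw [h1, h2, zero_add, leadingCoeff]

lemma twistedD_X_pow (d m : ℕ) :
    twistedD d ((X : ℂ[X]) ^ m) = C (m : ℂ) * X ^ (m - 1) + C ((d : ℂ) + 1) * X ^ (m + d) := by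
  rw [twistedD_apply, derivative_X_pow, ← pow_add, add_comm d m]

/-- The images of `1, X, …, X^(d-1)` in `ℂ[X]/range D` form a basis;
in particular the quotient has dimension `d`. -/
theorem stmt_4 (d : ℕ) (hd : 1 ≤ d) :
    (∃ B : Module.Basis (Fin d) ℂ (ℂ[X] ⧸ LinearMap.range (twistedD d)),
        ∀ i : Fin d, B i = Submodule.mkQ (LinearMap.range (twistedD d)) ((X : ℂ[X]) ^ (i : ℕ))) ∧
      Module.finrank ℂ (ℂ[X] ⧸ LinearMap.range (twistedD d)) = d := by
  set R := LinearMap.range (twistedD d) with hR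
  set π := Submodule.mkQ R with hπ
  set v : Fin d → (ℂ[X] ⧸ R) := fun i => π ((X : ℂ[X]) ^ (i : ℕ)) with hv
  -- key reduction identity in the quotient
  have hred : ∀ m : ℕ, π ((X : ℂ[X]) ^ (m + d)) =
      (-(m : ℂ) / ((d : ℂ) + 1)) • π ((X : ℂ[X]) ^ (m - 1)) := by
    intro m
    have h0 : π (twistedD d ((X : ℂ[X]) ^ m)) = 0 := by
      rw [hπ, Submodule.mkQ_apply, Submodule.Quotient.mk_eq_zero]
      exact LinearMap.mem_range_self _ _
    rw [twistedD_X_pow] at h0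
    have e : (m : ℂ) • π ((X : ℂ[X]) ^ (m - 1)) +
        ((d : ℂ) + 1) • π ((X : ℂ[X]) ^ (m + d)) = 0 := by
      rw [← h0, map_add]
      congr 1 <;> rw [← smul_eq_C_mul, map_smul]
    have e2 : ((d : ℂ) + 1) • π ((X : ℂ[X]) ^ (m + d)) =
        (-(m : ℂ)) • π ((X : ℂ[X]) ^ (m - 1)) := by
      rw [neg_smul]; exact eq_neg_of_add_eq_zero_right e
    calc π ((X : ℂ[X]) ^ (m + d))
        = (((d : ℂ) + 1)⁻¹ * ((d : ℂ) + 1)) • π ((X : ℂ[X]) ^ (m + d)) := by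
          rw [inv_mul_cancel₀ (dcast_ne d), one_smul]
      _ = ((d : ℂ) + 1)⁻¹ • (((d : ℂ) + 1) • π ((X : ℂ[X]) ^ (m + d))) := by
          rw [smul_smul]
      _ = ((d : ℂ) + 1)⁻¹ • ((-(m : ℂ)) • π ((X : ℂ[X]) ^ (m - 1))) := by rw [e2]
      _ = (-(m : ℂ) / ((d : ℂ) + 1)) • π ((X : ℂ[X]) ^ (m - 1)) := by
          rw [smul_smul]; congr 1; field_simp
  -- spanning
  have hmon : ∀ n : ℕ, π ((X : ℂ[X]) ^ n) ∈ Submodule.span ℂ (Set.range v) := by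
    intro n
    induction n using Nat.strong_induction_on with
    | _ n ih =>
      by_cases hn : n < d
      · exact Submodule.subset_span ⟨⟨n, hn⟩, rfl⟩
      · have hnd : (n - d) + d = n := by omega
        have h := hred (n - d)
        rw [hnd] at h
        rw [h]
        exact Submodule.smul_mem _ _ (ih (n - d - 1) (by omega))
  have hspan : Submodule.span ℂ (Set.range v) = ⊤ := by
    rw [eq_top_iff]
    rintro x -
    obtain ⟨P, rfl⟩ := Submodule.mkQ_surjective R x
    show π P ∈ _
    induction P using Polynomial.induction_on' with
    | add p q hp hq => rw [map_add]; exact Submodule.add_mem _ hp hq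
    | monomial n a =>
      rw [← C_mul_X_pow_eq_monomial, ← smul_eq_C_mul, map_smul]
      exact Submodule.smul_mem _ _ (hmon n)
  -- independence
  have hind : LinearIndependent ℂ v := by
    rw [Fintype.linearIndependent_iff]
    intro g hg i
    set P : ℂ[X] := ∑ j : Fin d, C (g j) * X ^ (j : ℕ) with hP
    have hπP : π P = 0 := by
      rw [hP, map_sum, ← hg]
      refine Finset.sum_congr rfl fun j _ => ?_
      rw [← smul_eq_C_mul, map_smul]
    have hPmem : P ∈ R := by
      rwa [hπ, Submodule.mkQ_apply, Submodule.Quotient.mk_eq_zero] at hπP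
    obtain ⟨Q, hQ⟩ := hPmem
    have hQ0 : Q = 0 := by
      by_contra hne
      have h1 := coeff_twistedD d Q
      rw [hQ] at h1
      have h2 : P.coeff (d + Q.natDegree) = 0 := by
        rw [hP, finset_sum_coeff]
        refine Finset.sum_eq_zero fun j _ => ?_
        rw [coeff_C_mul, coeff_X_pow, if_neg (by omega), mul_zero]
      rw [h2] at h1
      rcases mul_eq_zero.mp h1.symm with h | h
      · exact dcast_ne d h
      · exact leadingCoeff_ne_zero.mpr hne h
    have hP0 : P = 0 := by rw [← hQ, hQ0, map_zero]
    have hc := congrArg (fun p : ℂ[X] => p.coeff (i : ℕ)) hP0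
    simpa [hP, finset_sum_coeff, coeff_C_mul, coeff_X_pow, Fin.val_eq_val] using hc
  refine ⟨⟨Module.Basis.mk hind hspan.ge, fun i => Module.Basis.mk_apply hind hspan.ge i⟩,
    by rw [Module.finrank_eq_card_basis (Module.Basis.mk hind hspan.ge), Fintype.card_fin]⟩
end

section
/- Let d ≥ 1 and f = X^{d+1} ∈ ℂ[X] with derivative f' = (d+1)X^d. Let D : ℂ[X] → ℂ[X] be D(P) = P' + f'·P and let M : ℂ[X] → ℂ[X] be M(P) = f'·P. Then the ℂ-dimensions of the cokernels agree: dim_ℂ (ℂ[X]/range(D)) = dim_ℂ (ℂ[X]/range(M)). -/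
open Polynomial

/-- Multiplication by `f' = (d+1)X^d` on `ℂ[X]`. -/
noncomputable def mulByDf (d : ℕ) : ℂ[X] →ₗ[ℂ] ℂ[X] :=
  LinearMap.mulLeft ℂ (Polynomial.derivative ((X : ℂ[X]) ^ (d + 1)))

/-- Generic codisjointness lemma: if `T` can hit each `X^n` (n ≥ d) up to lower
degree error, then `range T ⊔ degreeLT d = ⊤`. -/
lemma codisj_aux (d : ℕ) (hd : 1 ≤ d) (T : ℂ[X] →ₗ[ℂ] ℂ[X])
    (h : ∀ n, d ≤ n → ∃ Q : ℂ[X], ((X : ℂ[X]) ^ n - T Q).degree < (n : WithBot ℕ)) :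
    Codisjoint (LinearMap.range T) (Polynomial.degreeLT ℂ d) := by
  rw [codisjoint_iff, eq_top_iff]
  suffices H : ∀ m (P : ℂ[X]), P.natDegree < m →
      P ∈ LinearMap.range T ⊔ Polynomial.degreeLT ℂ d by
    intro P _
    exact H (P.natDegree + 1) P (Nat.lt_succ_self _)
  intro m
  induction m with
  | zero => intro P hP; omega
  | succ m ih =>
    intro P hP
    by_cases hdeg : P.degree < (d : WithBot ℕ)
    · exact Submodule.mem_sup_right (Polynomial.mem_degreeLT.mpr hdeg)
    · push_neg at hdeg
      have hP0 : P ≠ 0 := by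
        intro h0
        rw [h0, Polynomial.degree_zero] at hdeg
        exact absurd hdeg (by simp)
      set n := P.natDegree with hn
      have hdegP : P.degree = (n : WithBot ℕ) := Polynomial.degree_eq_natDegree hP0
      have hdn : d ≤ n := by
        have : (d : WithBot ℕ) ≤ (n : WithBot ℕ) := hdegP ▸ hdeg
        exact_mod_cast this
      obtain ⟨Q, hQ⟩ := h n hdn
      set R := P - P.leadingCoeff • T Q with hR
      have key : P = T (P.leadingCoeff • Q) + R := by
        rw [map_smul, hR]; ring
      have hRdeg : R.degree < (n : WithBot ℕ) := by
        have hsplit : R = (P - C P.leadingCoeff * X ^ n) +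
            P.leadingCoeff • ((X : ℂ[X]) ^ n - T Q) := by
          simp only [hR, smul_sub, Polynomial.smul_eq_C_mul]; ring
        rw [hsplit]
        apply lt_of_le_of_lt (Polynomial.degree_add_le _ _)
        apply max_lt
        · have hlc : P.leadingCoeff ≠ 0 := Polynomial.leadingCoeff_ne_zero.mpr hP0
          have hdm : P.degree = (C P.leadingCoeff * X ^ n).degree := by
            rw [Polynomial.degree_C_mul_X_pow _ hlc, hdegP]
          have := Polynomial.degree_sub_lt hdm hP0 (by
            rw [Polynomial.leadingCoeff_C_mul_X_pow])
          rw [hdegP] at this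
          exact this
        · exact lt_of_le_of_lt (Polynomial.degree_smul_le _ _) hQ
      have hRnat : R.natDegree < n := by
        by_cases hR0 : R = 0
        · rw [hR0, Polynomial.natDegree_zero]; omega
        · exact (Polynomial.natDegree_lt_iff_degree_lt hR0).mpr hRdeg
      have hRmem := ih R (by omega)
      rw [key]
      exact Submodule.add_mem _ (Submodule.mem_sup_left (LinearMap.mem_range_self _ _)) hRmem

lemma deriv_pow_eq (d : ℕ) :
    Polynomial.derivative ((X : ℂ[X]) ^ (d + 1)) = C ((d : ℂ) + 1) * X ^ d := by
  rw [Polynomial.derivative_X_pow]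
  push_cast
  simp

lemma isCompl_M (d : ℕ) (hd : 1 ≤ d) :
    IsCompl (LinearMap.range (mulByDf d)) (Polynomial.degreeLT ℂ d) := by
  have hne : ((d : ℂ) + 1) ≠ 0 := by
    exact_mod_cast Nat.cast_add_one_ne_zero (R := ℂ) d
  constructor
  · rw [disjoint_iff_inf_le]
    rintro P ⟨⟨Q, rfl⟩, hmem⟩
    have hmem' := Polynomial.mem_degreeLT.mp hmem
    simp only [mulByDf, LinearMap.mulLeft_apply, deriv_pow_eq] at hmem' ⊢
    by_cases hQ : Q = 0
    · simp [hQ]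
    · exfalso
      have : (C ((d : ℂ) + 1) * X ^ d * Q).degree = (d : WithBot ℕ) + Q.degree := by
        rw [Polynomial.degree_mul, Polynomial.degree_C_mul_X_pow _ hne]
      rw [this] at hmem'
      have h0 : (0 : WithBot ℕ) ≤ Q.degree := Polynomial.zero_le_degree_iff.mpr hQ
      have : (d : WithBot ℕ) ≤ (d : WithBot ℕ) + Q.degree := le_add_of_nonneg_right h0
      exact absurd (lt_of_le_of_lt this hmem') (lt_irrefl _)
  · apply codisj_aux d hd
    intro n hn
    refine ⟨((d : ℂ) + 1)⁻¹ • X ^ (n - d), ?_⟩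
    have : mulByDf d (((d : ℂ) + 1)⁻¹ • X ^ (n - d)) = X ^ n := by
      simp only [mulByDf, LinearMap.mulLeft_apply, deriv_pow_eq, Polynomial.smul_eq_C_mul]
      rw [mul_mul_mul_comm, ← C_mul, mul_inv_cancel₀ hne, C_1, one_mul,
        ← pow_add, Nat.add_sub_cancel' hn]
    rw [this, sub_self, Polynomial.degree_zero]
    exact_mod_cast WithBot.bot_lt_coe n

lemma isCompl_D (d : ℕ) (hd : 1 ≤ d) :
    IsCompl (LinearMap.range (twistedD d)) (Polynomial.degreeLT ℂ d) := by
  have hne : ((d : ℂ) + 1) ≠ 0 := by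
    exact_mod_cast Nat.cast_add_one_ne_zero (R := ℂ) d
  constructor
  · rw [disjoint_iff_inf_le]
    rintro P ⟨⟨Q, rfl⟩, hmem⟩
    have hmem' := Polynomial.mem_degreeLT.mp hmem
    simp only [twistedD, LinearMap.add_apply, LinearMap.mulLeft_apply, deriv_pow_eq]
      at hmem' ⊢
    by_cases hQ : Q = 0
    · simp [hQ]
    · exfalso
      have hmul : (C ((d : ℂ) + 1) * X ^ d * Q).degree = (d : WithBot ℕ) + Q.degree := by
        rw [Polynomial.degree_mul, Polynomial.degree_C_mul_X_pow _ hne]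
      have hder : (Polynomial.derivative Q).degree < (C ((d : ℂ) + 1) * X ^ d * Q).degree := by
        rw [hmul]
        calc (Polynomial.derivative Q).degree < Q.degree := Polynomial.degree_derivative_lt hQ
          _ ≤ (d : WithBot ℕ) + Q.degree := le_add_of_nonneg_left (by exact_mod_cast Nat.zero_le d)
      have heq := Polynomial.degree_add_eq_right_of_degree_lt hder
      rw [heq, hmul] at hmem'
      have h0 : (0 : WithBot ℕ) ≤ Q.degree := Polynomial.zero_le_degree_iff.mpr hQ
      have : (d : WithBot ℕ) ≤ (d : WithBot ℕ) + Q.degree := le_add_of_nonneg_right h0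
      exact absurd (lt_of_le_of_lt this hmem') (lt_irrefl _)
  · apply codisj_aux d hd
    intro n hn
    refine ⟨((d : ℂ) + 1)⁻¹ • X ^ (n - d), ?_⟩
    have hT : twistedD d (((d : ℂ) + 1)⁻¹ • X ^ (n - d)) =
        ((d : ℂ) + 1)⁻¹ • (C ((n - d : ℕ) : ℂ) * X ^ (n - d - 1)) + X ^ n := by
      simp only [twistedD, LinearMap.add_apply, LinearMap.mulLeft_apply, deriv_pow_eq,
        map_smul, Polynomial.derivative_X_pow, Nat.add_sub_cancel]
      rw [Polynomial.smul_eq_C_mul, Polynomial.smul_eq_C_mul, mul_add]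
      congr 1
      push_cast
      rw [show C ((d:ℂ)+1)⁻¹ * (C ((d:ℂ)+1) * X ^ d * X ^ (n-d)) =
          (C ((d:ℂ)+1)⁻¹ * C ((d:ℂ)+1)) * (X ^ d * X ^ (n-d)) from by ring,
        ← C_mul, inv_mul_cancel₀ hne, C_1, one_mul, ← pow_add, Nat.add_sub_cancel' hn]
    rw [hT]
    have : (X : ℂ[X]) ^ n - (((d : ℂ) + 1)⁻¹ • (C ((n - d : ℕ) : ℂ) * X ^ (n - d - 1)) + X ^ n)
        = -(((d : ℂ) + 1)⁻¹ • (C ((n - d : ℕ) : ℂ) * X ^ (n - d - 1))) := by ring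
    rw [this, Polynomial.degree_neg]
    calc (((d : ℂ) + 1)⁻¹ • (C ((n - d : ℕ) : ℂ) * X ^ (n - d - 1))).degree
        ≤ (C ((n - d : ℕ) : ℂ) * X ^ (n - d - 1)).degree := Polynomial.degree_smul_le _ _
      _ ≤ (↑(n - d - 1) : WithBot ℕ) := Polynomial.degree_C_mul_X_pow_le _ _
      _ < (n : WithBot ℕ) := by exact_mod_cast (by omega : n - d - 1 < n)

/-- Hodge–de Rham degeneration for `(𝔸¹, X^(d+1))`: the cokernels of
`D(P) = P' + f'·P` and of `M(P) = f'·P` have the same `ℂ`-dimension. -/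
theorem stmt_5 (d : ℕ) (hd : 1 ≤ d) :
    Module.finrank ℂ (ℂ[X] ⧸ LinearMap.range (twistedD d)) =
      Module.finrank ℂ (ℂ[X] ⧸ LinearMap.range (mulByDf d)) := by
  rw [(Submodule.quotientEquivOfIsCompl _ _ (isCompl_D d hd)).finrank_eq,
    (Submodule.quotientEquivOfIsCompl _ _ (isCompl_M d hd)).finrank_eq]
end

section
/- Let f ∈ ℂ[X] be a polynomial of degree n ≥ 1, and let D : ℂ[X] → ℂ[X] be the ℂ-linear map D(P) = P' + f'·P, where P' and f' denote derivatives. Then D is injective and the quotient ℂ[X]/range(D) is a ℂ-vector space of dimension n − 1. -/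
open Polynomial

lemma twisted_key (f : ℂ[X]) (n : ℕ) (hn : 1 ≤ n) (hdeg : f.natDegree = n)
    (P : ℂ[X]) (hP : P ≠ 0) :
    (derivative P + derivative f * P).natDegree = P.natDegree + (n - 1) ∧
      (derivative P + derivative f * P).coeff (P.natDegree + (n - 1)) ≠ 0 := by
  have hf0 : f ≠ 0 := fun h => by simp [h] at hdeg; omega
  have hn1 : n - 1 + 1 = n := Nat.sub_add_cancel hn
  have hfd : (derivative f).natDegree = n - 1 := by
    have := degree_derivative_eq f (by omega : 0 < f.natDegree)
    rw [hdeg] at this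
    exact natDegree_eq_of_degree_eq_some this
  have hlc : (derivative f).leadingCoeff = f.leadingCoeff * n := by
    rw [leadingCoeff, hfd, coeff_derivative, hn1, leadingCoeff, hdeg]
    congr 1
    push_cast [Nat.cast_sub hn]
    ring
  have hlc0 : (derivative f).leadingCoeff ≠ 0 := by
    rw [hlc]
    exact mul_ne_zero (leadingCoeff_ne_zero.2 hf0) (by exact_mod_cast (by omega : n ≠ 0))
  set m := P.natDegree with hm
  have hcD : (derivative P).coeff (m + (n - 1)) = 0 := by
    rw [coeff_derivative, coeff_eq_zero_of_natDegree_lt (by omega)]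
    ring
  have hcM : (derivative f * P).coeff (m + (n - 1)) =
      (derivative f).leadingCoeff * P.leadingCoeff := by
    have := coeff_mul_degree_add_degree (derivative f) P
    rwa [hfd, Nat.add_comm] at this
  have hc : (derivative P + derivative f * P).coeff (m + (n - 1)) ≠ 0 := by
    rw [coeff_add, hcD, hcM, zero_add]
    exact mul_ne_zero hlc0 (leadingCoeff_ne_zero.2 hP)
  refine ⟨le_antisymm ?_ (le_natDegree_of_ne_zero hc), hc⟩
  refine (natDegree_add_le _ _).trans (max_le ?_ ?_)
  · exact (natDegree_derivative_le P).trans (by omega)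
  · exact (natDegree_mul_le).trans (by omega)

/-- For any polynomial potential `f` of degree `n ≥ 1`, the twisted de Rham
differential `D(P) = P' + f'·P` on `ℂ[X]` is injective and its cokernel has
`ℂ`-dimension `n - 1` (the total Milnor number of `f`). -/
theorem stmt_7 (f : ℂ[X]) (n : ℕ) (hn : 1 ≤ n) (hdeg : f.natDegree = n) :
    Function.Injective
        (Polynomial.derivative + LinearMap.mulLeft ℂ (Polynomial.derivative f) :
          ℂ[X] →ₗ[ℂ] ℂ[X]) ∧
      Module.finrank ℂ
          (ℂ[X] ⧸ LinearMap.range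
            (Polynomial.derivative + LinearMap.mulLeft ℂ (Polynomial.derivative f) :
              ℂ[X] →ₗ[ℂ] ℂ[X])) = n - 1 := by
  set D : ℂ[X] →ₗ[ℂ] ℂ[X] :=
    (Polynomial.derivative + LinearMap.mulLeft ℂ (Polynomial.derivative f)) with hD
  have hDapp : ∀ P : ℂ[X], D P = derivative P + derivative f * P := by
    intro P; simp [hD, LinearMap.mulLeft_apply]
  have key := twisted_key f n hn hdeg
  have hDne : ∀ P : ℂ[X], P ≠ 0 → D P ≠ 0 := by
    intro P hP h
    exact (key P hP).2 (by rw [← hDapp, h, coeff_zero])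
  have hinj : Function.Injective D := by
    rw [← LinearMap.ker_eq_bot, LinearMap.ker_eq_bot']
    intro P hP
    by_contra h
    exact hDne P h hP
  refine ⟨hinj, ?_⟩
  have hcompl : IsCompl (LinearMap.range D) (degreeLT ℂ (n - 1)) := by
    constructor
    · rw [disjoint_iff_inf_le]
      rintro x ⟨⟨P, rfl⟩, hx⟩
      rcases eq_or_ne P 0 with rfl | hP
      · simp
      · exfalso
        rw [SetLike.mem_coe, mem_degreeLT, degree_eq_natDegree (hDne P hP),
          hDapp, (key P hP).1] at hx
        norm_cast at hx
        omega
    · rw [codisjoint_iff_le_sup]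
      have Hsup : ∀ m : ℕ, ∀ g : ℂ[X], g.natDegree ≤ m →
          g ∈ LinearMap.range D ⊔ degreeLT ℂ (n - 1) := by
        intro m
        induction m using Nat.strong_induction_on with
        | _ m ih =>
        intro g hgm
        rcases eq_or_ne g 0 with rfl | hg0
        · exact Submodule.zero_mem _
        by_cases hlt : g.degree < ((n - 1 : ℕ) : WithBot ℕ)
        · exact Submodule.mem_sup_right (mem_degreeLT.2 hlt)
        have hge : n - 1 ≤ g.natDegree := by
          by_contra h
          exact hlt (by rw [degree_eq_natDegree hg0]
                        exact_mod_cast (by omega : g.natDegree < n - 1))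
        set M := g.natDegree with hM
        set k := M - (n - 1) with hk
        have hq := key (X ^ k) (pow_ne_zero _ X_ne_zero)
        rw [natDegree_X_pow] at hq
        have hkm : k + (n - 1) = M := by omega
        rw [hkm, ← hDapp] at hq
        set q : ℂ[X] := D (X ^ k) with hq'
        set a : ℂ := g.coeff M / q.coeff M with ha
        have hmem_q : q ∈ LinearMap.range D ⊔ degreeLT ℂ (n - 1) :=
          Submodule.mem_sup_left ⟨X ^ k, rfl⟩
        have hh : g - a • q ∈ LinearMap.range D ⊔ degreeLT ℂ (n - 1) := by
          rcases eq_or_ne (g - a • q) 0 with h0 | h0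
          · rw [h0]; exact Submodule.zero_mem _
          have hcoeff : (g - a • q).coeff M = 0 := by
            simp only [coeff_sub, coeff_smul, smul_eq_mul, ha]
            rw [div_mul_eq_mul_div, mul_div_assoc, div_self hq.2, mul_one, sub_self]
          have hle : (g - a • q).natDegree ≤ M := by
            refine (natDegree_sub_le _ _).trans (max_le le_rfl ?_)
            exact (natDegree_smul_le _ _).trans hq.1.le
          have hne : (g - a • q).natDegree ≠ M := fun h => h0 (by
            rwa [← h, ← leadingCoeff, leadingCoeff_eq_zero] at hcoeff)
          exact ih (g - a • q).natDegree (by omega) _ le_rfl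
        have hrepr : g = (g - a • q) + a • q := by ring
        rw [hrepr]
        exact Submodule.add_mem _ hh (Submodule.smul_mem _ _ hmem_q)
      intro g _
      exact Hsup g.natDegree g le_rfl
  have e := (Submodule.quotientEquivOfIsCompl _ _ hcompl).trans
    (Polynomial.degreeLTEquiv ℂ (n - 1))
  rw [e.finrank_eq, Module.finrank_fin_fun]
end
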